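/- arXiv:2410.17403 — 2 statements merged into one kernel-verified Lean document; each statement's English description precedes it below -/
import Mathlib

section
/- In the reachability layering of a digraph, every terminal pair is served within two consecutive layers: if s, t ∈ V* and E* contains a directed s–t path, then there exists an index j ≥ 0 such that E* contains a directed s–t path all of whose vertices lie in L_j ∪ L_{j+1}. -/
/-!
**Statement 3.** In the reachability layering of a digraph in which every vertex
lies in some layer, every terminal pair is served within two consecutive layers:
if `E*` contains a directed `s`–`t` path, then there is an index `j ≥ 0` such that
`E*` contains a directed `s`–`t` path all of whose vertices lie in `L_j ∪ L_{j+1}`.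
-/

/-- Reachability via directed paths using the edges of `E`. -/
def Reach {V : Type*} (E : Set (V × V)) (u w : V) : Prop :=
  Relation.ReflTransGen (fun a b => (a, b) ∈ E) u w

/-- The reachability layering of the digraph with edge set `E`, started at `v0`:
`L₀` is the set of vertices reachable from `v0`; for odd `j ≥ 1`, `L_j` is the set
of yet-unlayered vertices that can reach `L_{j-1}`; for even `j ≥ 2`, `L_j` is the
set of yet-unlayered vertices reachable from `L_{j-1}`. -/
def layer {V : Type*} (E : Set (V × V)) (v0 : V) : ℕ → Set V
  | 0 => {v | Reach E v0 v}
  | (j + 1) =>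
      {v | (∀ j' ≤ j, v ∉ layer E v0 j') ∧
        (if Odd (j + 1) then
          ∃ w ∈ layer E v0 j, Reach E v w
        else
          ∃ w ∈ layer E v0 j, Reach E w v)}

section Aux

variable {V : Type*} (E : Set (V × V)) (v0 : V)

lemma reach_trans {a b c : V} (h1 : Reach E a b) (h2 : Reach E b c) : Reach E a c :=
  Relation.ReflTransGen.trans h1 h2

lemma mem_layer_zero {v : V} : v ∈ layer E v0 0 ↔ Reach E v0 v := by
  simp only [layer, Set.mem_setOf_eq]

lemma mem_layer_succ {j : ℕ} {v : V} :
    v ∈ layer E v0 (j + 1) ↔ (∀ j' ≤ j, v ∉ layer E v0 j') ∧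
      (if Odd (j + 1) then ∃ w ∈ layer E v0 j, Reach E v w
       else ∃ w ∈ layer E v0 j, Reach E w v) := by
  simp only [layer, Set.mem_setOf_eq]

lemma level_le {m k : ℕ} {a b : V} (ha : a ∈ layer E v0 m) (hb : b ∈ layer E v0 k)
    (h : Reach E b a ∨ Reach E a b) : k ≤ m + 1 := by
  by_contra hc
  push_neg at hc
  obtain ⟨k', rfl⟩ : ∃ k', k = k' + 1 := ⟨k - 1, by omega⟩
  have hnot : ∀ j' ≤ k', b ∉ layer E v0 j' := ((mem_layer_succ E v0).mp hb).1
  rcases Nat.even_or_odd m with hm | hm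
  · rcases h with h | h
    · -- b reaches a ∈ L_m, m even ⇒ b ∈ L_{m+1} (odd), contradiction
      refine hnot (m + 1) (by omega) ((mem_layer_succ E v0).mpr
        ⟨fun j' hj' => hnot j' (by omega), ?_⟩)
      rw [if_pos hm.add_one]
      exact ⟨a, ha, h⟩
    · -- a ∈ L_m (even) reaches b ⇒ b ∈ L_m, contradiction
      rcases Nat.eq_zero_or_pos m with rfl | hm0
      · exact hnot 0 (by omega) ((mem_layer_zero E v0).mpr
          (reach_trans E ((mem_layer_zero E v0).mp ha) h))
      · obtain ⟨m', rfl⟩ : ∃ m', m = m' + 1 := ⟨m - 1, by omega⟩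
        have hodd : ¬ Odd (m' + 1) := Nat.not_odd_iff_even.mpr hm
        obtain ⟨-, hw⟩ := (mem_layer_succ E v0).mp ha
        rw [if_neg hodd] at hw
        obtain ⟨w, hwm, hwa⟩ := hw
        exact hnot (m' + 1) (by omega) ((mem_layer_succ E v0).mpr
          ⟨fun j' hj' => hnot j' (by omega),
            by rw [if_neg hodd]; exact ⟨w, hwm, reach_trans E hwa h⟩⟩)
  · obtain ⟨m', rfl⟩ : ∃ m', m = m' + 1 := ⟨m - 1, by
      rcases hm with ⟨c, hc⟩; omega⟩
    rcases h with h | h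
    · -- b reaches a ∈ L_m, m odd ⇒ b can reach L_{m-1} ⇒ b ∈ L_m
      obtain ⟨-, hw⟩ := (mem_layer_succ E v0).mp ha
      rw [if_pos hm] at hw
      obtain ⟨w, hwm, haw⟩ := hw
      exact hnot (m' + 1) (by omega) ((mem_layer_succ E v0).mpr
        ⟨fun j' hj' => hnot j' (by omega),
          by rw [if_pos hm]; exact ⟨w, hwm, reach_trans E h haw⟩⟩)
    · -- a ∈ L_m (odd) reaches b ⇒ b ∈ L_{m+1} (even)
      refine hnot (m' + 1 + 1) (by omega) ((mem_layer_succ E v0).mpr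
        ⟨fun j' hj' => hnot j' (by omega), ?_⟩)
      rw [if_neg (Nat.not_odd_iff_even.mpr hm.add_one)]
      exact ⟨a, ha, h⟩

lemma exists_chain {s t : V} (h : Reach E s t) :
    ∃ l : List V, l ≠ [] ∧ l.Chain' (fun a b => (a, b) ∈ E) ∧
      l.head? = some s ∧ l.getLast? = some t ∧
      l.Pairwise (fun a b => Reach E a b) := by
  induction h using Relation.ReflTransGen.head_induction_on with
  | refl => exact ⟨[t], by simp, List.isChain_singleton _, by simp, by simp, by simp⟩
  | head hac hcb ih =>
    rename_i a c
    obtain ⟨l, hne, hch, hh, hl, hpw⟩ := ih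
    obtain ⟨c', l', rfl⟩ : ∃ c' l', l = c' :: l' := by
      cases l with
      | nil => simp at hne
      | cons x xs => exact ⟨x, xs, rfl⟩
    have hc' : c' = c := by simpa using hh
    subst hc'
    obtain ⟨hpw1, hpw2⟩ := List.pairwise_cons.mp hpw
    refine ⟨a :: c' :: l', by simp, ?_, by simp, ?_, ?_⟩
    · exact List.isChain_cons_cons.mpr ⟨hac, hch⟩
    · rw [List.getLast?_cons_cons]; exact hl
    · refine List.pairwise_cons.mpr ⟨?_, hpw⟩
      intro v hv
      rcases List.mem_cons.mp hv with rfl | hv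
      · exact Relation.ReflTransGen.single hac
      · exact Relation.ReflTransGen.head hac (hpw1 v hv)

lemma exists_min {α : Type*} (f : α → ℕ) :
    ∀ l : List α, l ≠ [] → ∃ a ∈ l, ∀ b ∈ l, f a ≤ f b
  | [], h => absurd rfl h
  | [a], _ => ⟨a, by simp, by simp⟩
  | a :: b :: l, _ => by
    obtain ⟨c, hc, hmin⟩ := exists_min f (b :: l) (by simp)
    by_cases h : f a ≤ f c
    · refine ⟨a, by simp, ?_⟩
      intro x hx
      rcases List.mem_cons.mp hx with rfl | hx
      · exact le_refl _
      · exact le_trans h (hmin x hx)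
    · refine ⟨c, by simp [hc], ?_⟩
      intro x hx
      rcases List.mem_cons.mp hx with rfl | hx
      · omega
      · exact hmin x hx

end Aux

theorem stmt_3 {V : Type*} (E : Set (V × V)) (v0 : V)
    (hcov : ∀ v : V, ∃ j, v ∈ layer E v0 j)
    (s t : V) (hst : Reach E s t) :
    ∃ j : ℕ, ∃ l : List V, l ≠ [] ∧
      l.Chain' (fun a b => (a, b) ∈ E) ∧
      l.head? = some s ∧ l.getLast? = some t ∧
      ∀ v ∈ l, v ∈ layer E v0 j ∪ layer E v0 (j + 1) := by
  classical
  obtain ⟨l, hne, hch, hh, hl, hpw⟩ := exists_chain E hst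
  set f : V → ℕ := fun v => (hcov v).choose with hf
  have hfs : ∀ v, v ∈ layer E v0 (f v) := fun v => (hcov v).choose_spec
  obtain ⟨a, ha, hmin⟩ := exists_min f l hne
  refine ⟨f a, l, hne, hch, hh, hl, ?_⟩
  intro v hv
  have h1 : f v ≤ f a + 1 := by
    by_cases hva : v = a
    · subst hva; omega
    · have hsym : Symmetric (fun x y : V => Reach E x y ∨ Reach E y x) := by
        intro x y hxy; tauto
      have hpw' : l.Pairwise (fun x y : V => Reach E x y ∨ Reach E y x) :=
        hpw.imp fun h => Or.inl h
      have := (haveI : Std.Symm (fun x y : V => Reach E x y ∨ Reach E y x) := ⟨fun _ _ h => hsym h⟩; hpw'.forall hv ha hva)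
      exact level_le E v0 (hfs a) (hfs v) this
  have h2 : f a ≤ f v := hmin v hv
  rcases (by omega : f v = f a ∨ f v = f a + 1) with h | h
  · left; have := hfs v; rwa [h] at this
  · right; have := hfs v; rwa [h] at this
end

section
/- Consider the one-path junction tree construction: a digraph with edge set E* containing a directed path P with vertices v_0,…,v_{|P|}; for each i ∈ [k], a_i is the earliest vertex of P reachable from s_i, b_i is the latest vertex of P that can reach t_i, P_{s_i} ⊆ E* is a fixed directed s_i–a_i path and P_{t_i} ⊆ E* a fixed directed b_i–t_i path; intervals I_i = P[a_i, b_i] are grouped dyadically by length into groups D_0^v (zero-length intervals at v) and D_j^{v_ℓ} for j ≥ 1 and ℓ a multiple of 2^{j−1}; each nonempty group yields the junction tree H consisting of the subpath of P spanning the union of its intervals together with ∪_i (P_{s_i} ∪ P_{t_i}) over pairs i in the group, and ℋ denotes the collection of these junction trees. Then every vertex of V(E*) \ V(P) appears in at most 2(5·log₂|P| + 6) = 10·log₂|P| + 12 junction trees of ℋ, and the same bound holds for every edge of E* not on P. -/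
/-- The edge set of the walk whose vertex list is `l`. -/
def listEdges {V : Type*} (l : List V) : Set (V × V) :=
  {e | e ∈ l.zip l.tail}

/-- `l` is (the vertex list of) a directed path from `u` to `w` using edges of `E`. -/
def IsDipath {V : Type*} (E : Set (V × V)) (l : List V) (u w : V) : Prop :=
  l ≠ [] ∧ l.Chain' (fun a b => (a, b) ∈ E) ∧
    l.head? = some u ∧ l.getLast? = some w

open Relation

lemma chain_reach {V : Type*} (E : Set (V × V)) :
    ∀ (l : List V) (a : V), List.Chain (fun x y => (x, y) ∈ E) a l →
      ∀ x ∈ l, Reach E a x := by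
  intro l
  induction l with
  | nil => intro a _ x hx; simp at hx
  | cons b t ih =>
    intro a hc x hx
    change List.IsChain _ (a :: b :: t) at hc
    rw [List.chain_cons] at hc
    rcases List.mem_cons.mp hx with rfl | h
    · exact ReflTransGen.single hc.1
    · exact ReflTransGen.head hc.1 (ih b hc.2 x h)

lemma chain_reach_last {V : Type*} (E : Set (V × V)) :
    ∀ (l : List V) (a : V), List.Chain (fun x y => (x, y) ∈ E) a l →
      ∀ x ∈ a :: l, Reach E x ((a :: l).getLast (List.cons_ne_nil a l)) := by
  intro l
  induction l with
  | nil =>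
    intro a _ x hx
    rcases List.mem_cons.mp hx with rfl | h
    · simp [List.getLast]
      exact ReflTransGen.refl
    · simp at h
  | cons b t ih =>
    intro a hc x hx
    change List.IsChain _ (a :: b :: t) at hc
    rw [List.chain_cons] at hc
    rw [List.getLast_cons (List.cons_ne_nil b t)]
    rcases List.mem_cons.mp hx with rfl | h
    · exact ReflTransGen.head hc.1 (ih b hc.2 b List.mem_cons_self)
    · exact ih b hc.2 x h

lemma dipath_reach {V : Type*} {E : Set (V × V)} {l : List V} {u w x : V}
    (hd : IsDipath E l u w) (hx : x ∈ l) : Reach E u x ∧ Reach E x w := by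
  obtain ⟨hne, hch, hh, hl⟩ := hd
  obtain ⟨a, t, rfl⟩ := List.exists_cons_of_ne_nil hne
  have ha : a = u := by simpa using hh
  subst ha
  have hw : (a :: t).getLast (List.cons_ne_nil a t) = w := by
    rw [List.getLast?_eq_getLast (List.cons_ne_nil a t)] at hl
    simpa using hl
  have hch' : List.Chain (fun x y => (x, y) ∈ E) a t := hch
  constructor
  · rcases List.mem_cons.mp hx with rfl | h
    · exact ReflTransGen.refl
    · exact chain_reach E t a hch' x h
  · exact hw ▸ chain_reach_last E t a hch' x hx

lemma mem_of_listEdges {V : Type*} {l : List V} {e : V × V} (h : e ∈ listEdges l) :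
    e.2 ∈ l := by
  have h' : e ∈ l.zip l.tail := h
  exact List.mem_of_mem_tail (List.of_mem_zip h').2

lemma card_dvd_left (m a : ℕ) (hm : 0 < m) :
    {ℓ : ℕ | m ∣ ℓ ∧ a ≤ ℓ ∧ ℓ < a + 2 * m}.ncard ≤ 3 := by
  have hsub : {ℓ : ℕ | m ∣ ℓ ∧ a ≤ ℓ ∧ ℓ < a + 2 * m} ⊆
      (({m * (a / m), m * (a / m + 1), m * (a / m + 2)} : Finset ℕ) : Set ℕ) := by
    rintro ℓ ⟨⟨q, rfl⟩, h1, h2⟩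
    have hq1 : a / m ≤ q := by
      have := Nat.div_le_div_right (c := m) h1
      rwa [Nat.mul_div_cancel_left q hm] at this
    have hq2 : q < a / m + 3 := by
      have hdm := Nat.div_add_mod a m
      have hmod : a % m < m := Nat.mod_lt a hm
      have ha : a < m * (a / m) + m := by omega
      have : m * q < m * (a / m + 3) := by
        calc m * q < a + 2 * m := h2
          _ < m * (a / m) + m + 2 * m := by omega
          _ = m * (a / m + 3) := by ring
      exact lt_of_mul_lt_mul_left this (Nat.zero_le m)
    have : q = a / m ∨ q = a / m + 1 ∨ q = a / m + 2 := by omega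
    rcases this with rfl | rfl | rfl <;> simp
  calc {ℓ : ℕ | m ∣ ℓ ∧ a ≤ ℓ ∧ ℓ < a + 2 * m}.ncard
      ≤ (({m * (a / m), m * (a / m + 1), m * (a / m + 2)} : Finset ℕ) : Set ℕ).ncard :=
        Set.ncard_le_ncard hsub (Finset.finite_toSet _)
    _ = (({m * (a / m), m * (a / m + 1), m * (a / m + 2)} : Finset ℕ)).card :=
        Set.ncard_coe_finset _
    _ ≤ 3 := by
        apply (Finset.card_insert_le _ _).trans
        have : (({m * (a / m + 1), m * (a / m + 2)} : Finset ℕ)).card ≤ 2 :=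
          (Finset.card_insert_le _ _).trans (by simp)
        omega

lemma card_dvd_right (m b : ℕ) (hm : 0 < m) :
    {ℓ : ℕ | m ∣ ℓ ∧ ℓ ≤ b ∧ b < ℓ + 2 * m}.ncard ≤ 2 := by
  have hsub : {ℓ : ℕ | m ∣ ℓ ∧ ℓ ≤ b ∧ b < ℓ + 2 * m} ⊆
      (({m * (b / m - 1), m * (b / m)} : Finset ℕ) : Set ℕ) := by
    rintro ℓ ⟨⟨q, rfl⟩, h1, h2⟩
    have hq1 : q ≤ b / m := by
      have := Nat.div_le_div_right (c := m) h1
      rwa [Nat.mul_div_cancel_left q hm] at this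
    have hq2 : b / m ≤ q + 1 := by
      have hb : m * (b / m) ≤ b := Nat.mul_div_le b m
      have h3 : m * (b / m) < m * (q + 2) := by
        calc m * (b / m) ≤ b := hb
          _ < m * q + 2 * m := h2
          _ = m * (q + 2) := by ring
      have := lt_of_mul_lt_mul_left h3 (Nat.zero_le m)
      omega
    have : q = b / m - 1 ∨ q = b / m := by omega
    rcases this with rfl | rfl <;> simp
  calc {ℓ : ℕ | m ∣ ℓ ∧ ℓ ≤ b ∧ b < ℓ + 2 * m}.ncard
      ≤ (({m * (b / m - 1), m * (b / m)} : Finset ℕ) : Set ℕ).ncard :=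
        Set.ncard_le_ncard hsub (Finset.finite_toSet _)
    _ = _ := Set.ncard_coe_finset _
    _ ≤ 2 := (Finset.card_insert_le _ _).trans (by simp)

lemma count_bound {k : ℕ} (n : ℕ) (hn : 1 ≤ n) (A B : Fin k → ℕ)
    (hABle : ∀ i, A i ≤ B i)
    (Q1 Q2 : Fin k → Prop)
    (hQ1 : ∀ i i', Q1 i → Q1 i' → A i = A i')
    (hQ2 : ∀ i i', Q2 i → Q2 i' → B i = B i')
    (S0 : Set ℕ) (S : ℕ → Set ℕ)
    (hS0 : ∀ v ∈ S0, ∃ i, A i = B i ∧ A i = v ∧ (Q1 i ∨ Q2 i))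
    (hS : ∀ j, 1 ≤ j → ∀ ℓ ∈ S j, 2 ^ (j - 1) ∣ ℓ ∧
      ∃ i, B i - A i < 2 ^ j ∧ A i ≤ ℓ ∧ ℓ ≤ B i ∧ (Q1 i ∨ Q2 i)) :
    (S0.ncard : ℝ) + ∑ j ∈ Finset.Icc 1 (Nat.log 2 n + 1), ((S j).ncard : ℝ) ≤
      10 * Real.logb 2 (n : ℝ) + 12 := by
  classical
  -- bound on S0
  have hU1 : ∀ (f : Fin k → ℕ) (Q : Fin k → Prop),
      (∀ i i', Q i → Q i' → f i = f i') →
      {v : ℕ | ∃ i, Q i ∧ v = f i}.ncard ≤ 1 := by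
    intro f Q hQ
    by_cases hex : ∃ i, Q i
    · obtain ⟨i₀, hi₀⟩ := hex
      have : {v : ℕ | ∃ i, Q i ∧ v = f i} ⊆ {f i₀} := by
        rintro v ⟨i, hi, rfl⟩
        simp [hQ i i₀ hi hi₀]
      exact (Set.ncard_le_ncard this (Set.finite_singleton _)).trans
        (by simp [Set.ncard_singleton])
    · have : {v : ℕ | ∃ i, Q i ∧ v = f i} = ∅ := by
        ext v; simp only [Set.mem_setOf_eq, Set.mem_empty_iff_false, iff_false]
        rintro ⟨i, hi, -⟩; exact hex ⟨i, hi⟩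
      simp [this]
  have h0 : S0.ncard ≤ 2 := by
    have hsub : S0 ⊆ {v : ℕ | ∃ i, Q1 i ∧ v = A i} ∪ {v : ℕ | ∃ i, Q2 i ∧ v = B i} := by
      intro v hv
      obtain ⟨i, hAB, hAv, hQ⟩ := hS0 v hv
      rcases hQ with h | h
      · exact Or.inl ⟨i, h, hAv.symm⟩
      · exact Or.inr ⟨i, h, by omega⟩
    have hf1 : {v : ℕ | ∃ i, Q1 i ∧ v = A i}.Finite := by
      apply Set.Finite.subset (Set.finite_range A); rintro v ⟨i, -, rfl⟩; exact ⟨i, rfl⟩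
    have hf2 : {v : ℕ | ∃ i, Q2 i ∧ v = B i}.Finite := by
      apply Set.Finite.subset (Set.finite_range B); rintro v ⟨i, -, rfl⟩; exact ⟨i, rfl⟩
    calc S0.ncard ≤ _ := Set.ncard_le_ncard hsub (hf1.union hf2)
      _ ≤ _ := Set.ncard_union_le _ _
      _ ≤ 2 := by
          have := hU1 A Q1 hQ1; have := hU1 B Q2 hQ2; omega
  -- bound on each S j
  have hj : ∀ j ∈ Finset.Icc 1 (Nat.log 2 n + 1), ((S j).ncard : ℝ) ≤ 5 := by
    intro j hjmem
    have hj1 : 1 ≤ j := (Finset.mem_Icc.mp hjmem).1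
    set m := 2 ^ (j - 1) with hm
    have hmpos : 0 < m := Nat.pow_pos (by norm_num)
    have h2m : 2 ^ j = 2 * m := by
      rw [hm, ← pow_succ']
      congr 1
      omega
    have hT1f : {ℓ : ℕ | m ∣ ℓ ∧ ∃ i, Q1 i ∧ A i ≤ ℓ ∧ ℓ < A i + 2 * m}.Finite := by
      by_cases hex : ∃ i, Q1 i
      · obtain ⟨i₀, hi₀⟩ := hex
        apply Set.Finite.subset (Set.finite_Icc 0 (A i₀ + 2 * m))
        rintro ℓ ⟨-, i, hi, -, hlt⟩
        have := hQ1 i i₀ hi hi₀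
        exact Set.mem_Icc.mpr ⟨Nat.zero_le _, by omega⟩
      · convert Set.finite_empty
        ext ℓ; simp only [Set.mem_setOf_eq, Set.mem_empty_iff_false, iff_false]
        rintro ⟨-, i, hi, -⟩; exact hex ⟨i, hi⟩
    have hT2f : {ℓ : ℕ | m ∣ ℓ ∧ ∃ i, Q2 i ∧ ℓ ≤ B i ∧ B i < ℓ + 2 * m}.Finite := by
      by_cases hex : ∃ i, Q2 i
      · obtain ⟨i₀, hi₀⟩ := hex
        apply Set.Finite.subset (Set.finite_Icc 0 (B i₀))
        rintro ℓ ⟨-, i, hi, hle, -⟩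
        have := hQ2 i i₀ hi hi₀
        exact Set.mem_Icc.mpr ⟨Nat.zero_le _, by omega⟩
      · convert Set.finite_empty
        ext ℓ; simp only [Set.mem_setOf_eq, Set.mem_empty_iff_false, iff_false]
        rintro ⟨-, i, hi, -⟩; exact hex ⟨i, hi⟩
    have hsub : S j ⊆ {ℓ : ℕ | m ∣ ℓ ∧ ∃ i, Q1 i ∧ A i ≤ ℓ ∧ ℓ < A i + 2 * m} ∪
        {ℓ : ℕ | m ∣ ℓ ∧ ∃ i, Q2 i ∧ ℓ ≤ B i ∧ B i < ℓ + 2 * m} := by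
      intro ℓ hℓ
      obtain ⟨hdvd, i, hlt, hAl, hlB, hQ⟩ := hS j hj1 ℓ hℓ
      rw [h2m] at hlt
      have hA := hABle i
      rcases hQ with h | h
      · exact Or.inl ⟨hdvd, i, h, hAl, by omega⟩
      · exact Or.inr ⟨hdvd, i, h, hlB, by omega⟩
    have hb1 : {ℓ : ℕ | m ∣ ℓ ∧ ∃ i, Q1 i ∧ A i ≤ ℓ ∧ ℓ < A i + 2 * m}.ncard ≤ 3 := by
      by_cases hex : ∃ i, Q1 i
      · obtain ⟨i₀, hi₀⟩ := hex
        have hsub' : {ℓ : ℕ | m ∣ ℓ ∧ ∃ i, Q1 i ∧ A i ≤ ℓ ∧ ℓ < A i + 2 * m} ⊆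
            {ℓ : ℕ | m ∣ ℓ ∧ A i₀ ≤ ℓ ∧ ℓ < A i₀ + 2 * m} := by
          rintro ℓ ⟨hdvd, i, hi, h1, h2⟩
          have := hQ1 i i₀ hi hi₀
          exact ⟨hdvd, by omega, by omega⟩
        have hfin : {ℓ : ℕ | m ∣ ℓ ∧ A i₀ ≤ ℓ ∧ ℓ < A i₀ + 2 * m}.Finite := by
          apply Set.Finite.subset (Set.finite_Icc 0 (A i₀ + 2 * m))
          rintro ℓ ⟨-, -, h⟩; exact Set.mem_Icc.mpr ⟨Nat.zero_le _, by omega⟩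
        exact (Set.ncard_le_ncard hsub' hfin).trans (card_dvd_left m (A i₀) hmpos)
      · have : {ℓ : ℕ | m ∣ ℓ ∧ ∃ i, Q1 i ∧ A i ≤ ℓ ∧ ℓ < A i + 2 * m} = ∅ := by
          ext ℓ; simp only [Set.mem_setOf_eq, Set.mem_empty_iff_false, iff_false]
          rintro ⟨-, i, hi, -⟩; exact hex ⟨i, hi⟩
        simp [this]
    have hb2 : {ℓ : ℕ | m ∣ ℓ ∧ ∃ i, Q2 i ∧ ℓ ≤ B i ∧ B i < ℓ + 2 * m}.ncard ≤ 2 := by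
      by_cases hex : ∃ i, Q2 i
      · obtain ⟨i₀, hi₀⟩ := hex
        have hsub' : {ℓ : ℕ | m ∣ ℓ ∧ ∃ i, Q2 i ∧ ℓ ≤ B i ∧ B i < ℓ + 2 * m} ⊆
            {ℓ : ℕ | m ∣ ℓ ∧ ℓ ≤ B i₀ ∧ B i₀ < ℓ + 2 * m} := by
          rintro ℓ ⟨hdvd, i, hi, h1, h2⟩
          have := hQ2 i i₀ hi hi₀
          exact ⟨hdvd, by omega, by omega⟩
        have hfin : {ℓ : ℕ | m ∣ ℓ ∧ ℓ ≤ B i₀ ∧ B i₀ < ℓ + 2 * m}.Finite := by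
          apply Set.Finite.subset (Set.finite_Icc 0 (B i₀))
          rintro ℓ ⟨-, h, -⟩; exact Set.mem_Icc.mpr ⟨Nat.zero_le _, h⟩
        exact (Set.ncard_le_ncard hsub' hfin).trans (card_dvd_right m (B i₀) hmpos)
      · have : {ℓ : ℕ | m ∣ ℓ ∧ ∃ i, Q2 i ∧ ℓ ≤ B i ∧ B i < ℓ + 2 * m} = ∅ := by
          ext ℓ; simp only [Set.mem_setOf_eq, Set.mem_empty_iff_false, iff_false]
          rintro ⟨-, i, hi, -⟩; exact hex ⟨i, hi⟩
        simp [this]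
    have : (S j).ncard ≤ 5 := by
      calc (S j).ncard ≤ _ := Set.ncard_le_ncard hsub (hT1f.union hT2f)
        _ ≤ _ := Set.ncard_union_le _ _
        _ ≤ 5 := by omega
    exact_mod_cast this.trans (by norm_num)
  -- sum it up
  set L := Nat.log 2 n with hL
  have hsum : ∑ j ∈ Finset.Icc 1 (L + 1), ((S j).ncard : ℝ) ≤ (L + 1) * 5 := by
    calc ∑ j ∈ Finset.Icc 1 (L + 1), ((S j).ncard : ℝ)
        ≤ ∑ _j ∈ Finset.Icc 1 (L + 1), (5 : ℝ) := Finset.sum_le_sum hj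
      _ = (L + 1) * 5 := by
          rw [Finset.sum_const, Nat.card_Icc]
          simp [nsmul_eq_mul]
    
  have hlog : (L : ℝ) ≤ Real.logb 2 (n : ℝ) := by
    have := Real.natLog_le_logb n 2
    simpa [hL] using this
  have h0' : (S0.ncard : ℝ) ≤ 2 := by exact_mod_cast h0
  have hLnn : (0 : ℝ) ≤ (L : ℝ) := Nat.cast_nonneg _
  nlinarith [hsum, hlog, h0']

theorem stmt_9 {V : Type*} (Estar : Set (V × V)) (n : ℕ) (hn : 1 ≤ n) (p : ℕ → V)
    -- `P` is a path with distinct vertices `p 0, …, p n` (so `|P| = n` edges)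
    (hpinj : ∀ l ≤ n, ∀ l' ≤ n, p l = p l' → l = l')
    (hpath : ∀ l, l < n → (p l, p (l + 1)) ∈ Estar)
    (k : ℕ) (s t : Fin k → V) (A B : Fin k → ℕ)
    (hAn : ∀ i, A i ≤ n) (hBn : ∀ i, B i ≤ n) (hABle : ∀ i, A i ≤ B i)
    -- `A i` is the earliest index on `P` reachable from `s i`
    (hAreach : ∀ i, Reach Estar (s i) (p (A i)))
    (hAmin : ∀ i, ∀ l ≤ n, Reach Estar (s i) (p l) → A i ≤ l)
    -- `B i` is the latest index on `P` that can reach `t i`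
    (hBreach : ∀ i, Reach Estar (p (B i)) (t i))
    (hBmax : ∀ i, ∀ l ≤ n, Reach Estar (p l) (t i) → l ≤ B i)
    -- the fixed connecting dipaths, contained in `E*`
    (Ps Pt : Fin k → List V)
    (hPs : ∀ i, IsDipath Estar (Ps i) (s i) (p (A i)))
    (hPt : ∀ i, IsDipath Estar (Pt i) (p (B i)) (t i)) :
    -- the dyadic groups
    let grp : ℕ → ℕ → Finset (Fin k) := fun j ℓ =>
      Finset.univ.filter (fun i => 2 ^ (j - 1) ≤ B i - A i ∧ B i - A i < 2 ^ j ∧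
        A i ≤ ℓ ∧ ℓ ≤ B i)
    let grp0 : ℕ → Finset (Fin k) := fun v =>
      Finset.univ.filter (fun i => A i = B i ∧ A i = v)
    -- vertex set of the junction tree associated with a group `g`
    let vertH : Finset (Fin k) → Set V := fun g =>
      {x | ∃ l, (∃ i ∈ g, A i ≤ l) ∧ (∃ i ∈ g, l ≤ B i) ∧ x = p l} ∪
        {x | ∃ i ∈ g, x ∈ Ps i ∨ x ∈ Pt i}
    -- edge set of the junction tree associated with a group `g`
    let edgeH : Finset (Fin k) → Set (V × V) := fun g =>
      {e | ∃ l, (∃ i ∈ g, A i ≤ l) ∧ (∃ i ∈ g, l + 1 ≤ B i) ∧ e = (p l, p (l + 1))} ∪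
        {e | ∃ i ∈ g, e ∈ listEdges (Ps i) ∨ e ∈ listEdges (Pt i)}
    -- vertices of `V(E*) \ V(P)` lie in at most `10 log₂|P| + 12` junction trees
    (∀ u : V, (∃ e ∈ Estar, u = e.1 ∨ u = e.2) → (∀ l ≤ n, u ≠ p l) →
      (({v | v ≤ n ∧ (grp0 v).Nonempty ∧ u ∈ vertH (grp0 v)}.ncard : ℝ) +
        ∑ j ∈ Finset.Icc 1 (Nat.log 2 n + 1),
          ({ℓ | ℓ ≤ n ∧ 2 ^ (j - 1) ∣ ℓ ∧ (grp j ℓ).Nonempty ∧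
            u ∈ vertH (grp j ℓ)}.ncard : ℝ)) ≤
        10 * Real.logb 2 (n : ℝ) + 12) ∧
    -- edges of `E*` not on `P` lie in at most `10 log₂|P| + 12` junction trees
    (∀ e ∈ Estar, (∀ l, l < n → e ≠ (p l, p (l + 1))) →
      (({v | v ≤ n ∧ (grp0 v).Nonempty ∧ e ∈ edgeH (grp0 v)}.ncard : ℝ) +
        ∑ j ∈ Finset.Icc 1 (Nat.log 2 n + 1),
          ({ℓ | ℓ ≤ n ∧ 2 ^ (j - 1) ∣ ℓ ∧ (grp j ℓ).Nonempty ∧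
            e ∈ edgeH (grp j ℓ)}.ncard : ℝ)) ≤
        10 * Real.logb 2 (n : ℝ) + 12) := by
  
  intro grp grp0 vertH edgeH
  have keyA : ∀ (x : V) (i i' : Fin k), x ∈ Ps i → x ∈ Ps i' → A i = A i' := by
    intro x i i' h h'
    have r1 : Reach Estar (s i) x := (dipath_reach (hPs i) h).1
    have r2 : Reach Estar x (p (A i')) := (dipath_reach (hPs i') h').2
    have r1' : Reach Estar (s i') x := (dipath_reach (hPs i') h').1
    have r2' : Reach Estar x (p (A i)) := (dipath_reach (hPs i) h).2
    have h1 : A i ≤ A i' := hAmin i (A i') (hAn i') (Relation.ReflTransGen.trans r1 r2)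
    have h2 : A i' ≤ A i := hAmin i' (A i) (hAn i) (Relation.ReflTransGen.trans r1' r2')
    omega
  have keyB : ∀ (x : V) (i i' : Fin k), x ∈ Pt i → x ∈ Pt i' → B i = B i' := by
    intro x i i' h h'
    have r1 : Reach Estar (p (B i)) x := (dipath_reach (hPt i) h).1
    have r2 : Reach Estar x (t i') := (dipath_reach (hPt i') h').2
    have r1' : Reach Estar (p (B i')) x := (dipath_reach (hPt i') h').1
    have r2' : Reach Estar x (t i) := (dipath_reach (hPt i) h).2
    have h1 : B i ≤ B i' := hBmax i' (B i) (hBn i) (Relation.ReflTransGen.trans r1 r2)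
    have h2 : B i' ≤ B i := hBmax i (B i') (hBn i') (Relation.ReflTransGen.trans r1' r2')
    omega
  constructor
  · intro u _hu hnp
    apply count_bound n hn A B hABle (fun i => u ∈ Ps i) (fun i => u ∈ Pt i)
      (fun i i' h h' => keyA u i i' h h') (fun i i' h h' => keyB u i i' h h')
    · intro v hv
      obtain ⟨hvn, -, hmem⟩ := hv
      simp only [vertH, grp0, Set.mem_union, Set.mem_setOf_eq, Finset.mem_filter,
        Finset.mem_univ, true_and] at hmem
      rcases hmem with ⟨l, ⟨i, hi, hAl⟩, ⟨i', hi', hlB⟩, hup⟩ | ⟨i, hi, hQ⟩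
      · exact absurd hup (hnp l (le_trans hlB (hBn i')))
      · exact ⟨i, hi.1, hi.2, hQ⟩
    · intro j hj1 ℓ hℓ
      obtain ⟨hln, hdvd, -, hmem⟩ := hℓ
      simp only [vertH, grp, Set.mem_union, Set.mem_setOf_eq, Finset.mem_filter,
        Finset.mem_univ, true_and] at hmem
      rcases hmem with ⟨l, ⟨i, hi, hAl⟩, ⟨i', hi', hlB⟩, hup⟩ | ⟨i, hi, hQ⟩
      · exact absurd hup (hnp l (le_trans hlB (hBn i')))
      · exact ⟨hdvd, i, hi.2.1, hi.2.2.1, hi.2.2.2, hQ⟩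
  · intro e _he hne
    apply count_bound n hn A B hABle (fun i => e ∈ listEdges (Ps i))
      (fun i => e ∈ listEdges (Pt i))
      (fun i i' h h' => keyA e.2 i i' (mem_of_listEdges h) (mem_of_listEdges h'))
      (fun i i' h h' => keyB e.2 i i' (mem_of_listEdges h) (mem_of_listEdges h'))
    · intro v hv
      obtain ⟨hvn, -, hmem⟩ := hv
      simp only [edgeH, grp0, Set.mem_union, Set.mem_setOf_eq, Finset.mem_filter,
        Finset.mem_univ, true_and] at hmem
      rcases hmem with ⟨l, ⟨i, hi, hAl⟩, ⟨i', hi', hlB⟩, hep⟩ | ⟨i, hi, hQ⟩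
      · have hln : l < n := by have := hBn i'; omega
        exact absurd hep (hne l hln)
      · exact ⟨i, hi.1, hi.2, hQ⟩
    · intro j hj1 ℓ hℓ
      obtain ⟨hln, hdvd, -, hmem⟩ := hℓ
      simp only [edgeH, grp, Set.mem_union, Set.mem_setOf_eq, Finset.mem_filter,
        Finset.mem_univ, true_and] at hmem
      rcases hmem with ⟨l, ⟨i, hi, hAl⟩, ⟨i', hi', hlB⟩, hep⟩ | ⟨i, hi, hQ⟩
      · have hln : l < n := by have := hBn i'; omega
        exact absurd hep (hne l hln)
      · exact ⟨hdvd, i, hi.2.1, hi.2.2.1, hi.2.2.2, hQ⟩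
end
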